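/- If a complex number a satisfies |a| < 1, |a − 1| ≥ 1 and |2a − 1| < 2, then the intersection of the closed unit disk D₀ with the closed disk D_{2a−1} of radius 1 centered at 2a−1 is contained in the union of the open disk of radius 1 centered at a and the closed disk of radius 1 centered at a − 1. -/

import Mathlib

theorem stmt_3 (a : ℂ) (h1 : ‖a‖ < 1) (h2 : 1 ≤ ‖a - 1‖)
    (h3 : ‖2 * a - 1‖ < 2) :
    Metric.closedBall (0 : ℂ) 1 ∩ Metric.closedBall (2 * a - 1) 1 ⊆
      Metric.ball a 1 ∪ Metric.closedBall (a - 1) 1 := by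
  intro z hz
  obtain ⟨hz0, hz1⟩ := hz
  simp only [Metric.mem_closedBall, Metric.mem_ball, Set.mem_union, Complex.dist_eq,
    sub_zero] at *
  by_contra hc
  push_neg at hc
  obtain ⟨hA, hB⟩ := hc
  have sq : ∀ w : ℂ, ‖w‖ ^ 2 = (w.re)^2 + (w.im)^2 := by
    intro w; rw [Complex.sq_norm, Complex.normSq_apply]; ring
  have e2 : (1:ℝ) ≤ ((a-1).re)^2 + ((a-1).im)^2 := by
    rw [← sq]; nlinarith [norm_nonneg (a-1)]
  have e0 : ((z).re)^2 + ((z).im)^2 ≤ 1 := by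
    rw [← sq]; nlinarith [norm_nonneg z]
  have e1 : ((z - (2*a-1)).re)^2 + ((z - (2*a-1)).im)^2 ≤ 1 := by
    rw [← sq]; nlinarith [norm_nonneg (z - (2*a-1))]
  have eA : (1:ℝ) ≤ ((z-a).re)^2 + ((z-a).im)^2 := by
    rw [← sq]; nlinarith [norm_nonneg (z-a)]
  have eB : (1:ℝ) < ((z-(a-1)).re)^2 + ((z-(a-1)).im)^2 := by
    rw [← sq]; nlinarith [norm_nonneg (z-(a-1))]
  simp only [Complex.sub_re, Complex.sub_im, Complex.mul_re, Complex.mul_im,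
    Complex.one_re, Complex.one_im, Complex.re_ofNat, Complex.im_ofNat] at e0 e1 e2 eA eB
  nlinarith [sq_nonneg (a.re), sq_nonneg (a.im), e2, e0, e1, eA, eB]
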